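/- Let m ≥ 1 and k be integers. If λ is a complex 4m-th root of unity, then 1 + λ^m - λ^k ≠ 0. -/

import Mathlib

/-- If λ is a complex 4m-th root of unity (m ≥ 1, k an integer), then 1 + λ^m - λ^k ≠ 0. -/
theorem stmt_3 (m : ℕ) (hm : 1 ≤ m) (k : ℤ) (lam : ℂ) (hlam : lam ^ (4 * m) = 1) :
    1 + lam ^ m - lam ^ k ≠ 0 := by
  intro h
  have hne : lam ≠ 0 := by
    intro h0
    rw [h0, zero_pow (by positivity)] at hlam
    exact zero_ne_one hlam
  -- abs lam = 1
  have habs : ‖lam‖ = 1 := by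
    have h1 : ‖lam‖ ^ (4 * m) = 1 := by
      rw [← norm_pow, hlam, norm_one]
    rcases lt_trichotomy (‖lam‖) 1 with hl | hl | hl
    · have := pow_lt_one₀ (norm_nonneg lam) hl (by positivity : 4 * m ≠ 0)
      rw [h1] at this; linarith
    · exact hl
    · have := one_lt_pow₀ hl (by positivity : 4 * m ≠ 0)
      rw [h1] at this; linarith
  have habk : ‖lam ^ k‖ = 1 := by
    rw [norm_zpow, habs, one_zpow]
  obtain ⟨μ, hμ⟩ : ∃ μ, lam ^ m = μ := ⟨_, rfl⟩
  rw [hμ] at h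
  have hμ4 : μ ^ 4 = 1 := by
    rw [← hμ, ← pow_mul, mul_comm, hlam]
  have hk : lam ^ k = 1 + μ := by linear_combination -h
  have hfac : (μ - 1) * (μ + 1) * (μ - Complex.I) * (μ + Complex.I) = 0 := by
    have hI : Complex.I ^ 2 = -1 := Complex.I_sq
    linear_combination hμ4 + (1 - μ ^ 2) * hI
  have sq1 : ‖lam ^ k‖ ^ 2 = 1 := by rw [habk]; norm_num
  rw [hk, Complex.sq_norm, Complex.normSq_apply] at sq1
  rcases mul_eq_zero.mp hfac with hf | hf
  · rcases mul_eq_zero.mp hf with hf | hf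
    · rcases mul_eq_zero.mp hf with hf | hf
      · have : μ = 1 := by linear_combination hf
        rw [this] at sq1; norm_num at sq1
      · have : μ = -1 := by linear_combination hf
        rw [this] at sq1; norm_num at sq1
    · have : μ = Complex.I := by linear_combination hf
      rw [this] at sq1; simp [Complex.add_re, Complex.add_im] at sq1
  · have : μ = -Complex.I := by linear_combination hf
    rw [this] at sq1; simp [Complex.add_re, Complex.add_im] at sq1
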